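/- Disappearance of the p-Laplacian fundamental solution at the critical exponent: let N ≥ 2, p_c = 2N/(N+1), and fix M > 0 and t > 0. For each p ∈ (p_c, 2) let B_p denote the p-Laplacian Barenblatt solution whose constant C = C(p) > 0 is chosen so that ∫_{ℝ^N} B_p(x,t) dx = M. Then, as p → p_c from above: (a) for every x ≠ 0, B_p(x,t) → 0; and (b) for every bounded continuous function f : ℝ^N → ℝ, ∫_{ℝ^N} f(x) B_p(x,t) dx → M·f(0); that is, the measures B_p(·,t) dx converge weakly-* to the Dirac mass M·δ₀. -/

import Mathlib

open MeasureTheory Real Filter Topology Set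

noncomputable section

/-- `λ = N(p-2)+p`. -/
def pleLambda (N : ℕ) (p : ℝ) : ℝ := N * (p - 2) + p

/-- `β = 1/λ`. -/
def pleBeta (N : ℕ) (p : ℝ) : ℝ := 1 / pleLambda N p

/-- `α = Nβ`. -/
def pleAlpha (N : ℕ) (p : ℝ) : ℝ := N * pleBeta N p

/-- `k = ((2-p)/p) λ^{-1/(p-1)}`. -/
def pleK (N : ℕ) (p : ℝ) : ℝ := (2 - p) / p * pleLambda N p ^ (-(1 / (p - 1)))

/-- The Barenblatt solution
`B(x,t) = t^{-α} (C + k (|x| t^{-β})^{p/(p-1)})^{-(p-1)/(2-p)}`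
of the `p`-Laplacian evolution equation, for `p_c < p < 2`. -/
def pleBarenblatt (N : ℕ) (p C : ℝ) (x : EuclideanSpace ℝ (Fin N)) (t : ℝ) : ℝ :=
  t ^ (-pleAlpha N p) *
    (C + pleK N p * (‖x‖ * t ^ (-pleBeta N p)) ^ (p / (p - 1))) ^ (-((p - 1) / (2 - p)))

lemma ple_pc_gt_one {N : ℕ} (hN : 2 ≤ N) : (1:ℝ) < 2 * N / (N + 1) := by
  have h : (0:ℝ) < N + 1 := by positivity
  rw [lt_div_iff₀ h]
  have : (2:ℝ) ≤ N := by exact_mod_cast hN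
  linarith

lemma ple_pc_lt_two {N : ℕ} (hN : 2 ≤ N) : 2 * (N:ℝ) / (N + 1) < 2 := by
  have h : (0:ℝ) < N + 1 := by positivity
  rw [div_lt_iff₀ h]; linarith

lemma ple_lambda_pos {N : ℕ} {p : ℝ} (hp1 : 2 * N / (N + 1) < p) :
    0 < pleLambda N p := by
  have h : (0:ℝ) < N + 1 := by positivity
  rw [div_lt_iff₀ h] at hp1
  unfold pleLambda; nlinarith

lemma ple_k_pos {N : ℕ} {p : ℝ} (hl : 0 < pleLambda N p) (hp0 : 0 < p) (hp2 : p < 2) :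
    0 < pleK N p := by
  unfold pleK
  exact mul_pos (div_pos (by linarith) hp0) (Real.rpow_pos_of_pos hl _)

lemma ple_barenblatt_nonneg {N : ℕ} {p Cc t : ℝ} (hk : 0 ≤ pleK N p) (hC : 0 ≤ Cc)
    (ht : 0 ≤ t) (x : EuclideanSpace ℝ (Fin N)) : 0 ≤ pleBarenblatt N p Cc x t := by
  unfold pleBarenblatt
  have h1 : (0:ℝ) ≤ ‖x‖ * t ^ (-pleBeta N p) := by positivity
  have h2 : (0:ℝ) ≤ Cc + pleK N p * (‖x‖ * t ^ (-pleBeta N p)) ^ (p / (p - 1)) := by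
    have := Real.rpow_nonneg h1 (p / (p-1)); positivity
  positivity

/-- The key pointwise upper bound, independent of the constant `C`. -/
lemma ple_barenblatt_le {N : ℕ} {p Cc t : ℝ}
    (hp1 : 1 < p) (hp2 : p < 2) (hl : 0 < pleLambda N p) (hC : 0 < Cc) (ht : 0 < t)
    {x : EuclideanSpace ℝ (Fin N)} (hx : x ≠ 0) :
    pleBarenblatt N p Cc x t ≤
      t ^ (2 - p)⁻¹ * ((2 - p) / p) ^ (-((p - 1) / (2 - p))) * pleLambda N p ^ (2 - p)⁻¹ *
        ‖x‖ ^ (-(p / (2 - p))) := by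
  have hr : 0 < ‖x‖ := norm_pos_iff.mpr hx
  have hp0 : (0:ℝ) < p := by linarith
  have hap : (0:ℝ) < (2 - p)/p := div_pos (by linarith) hp0
  have hk : 0 < pleK N p := ple_k_pos hl hp0 hp2
  set r := ‖x‖
  set q : ℝ := p / (p - 1) with hq
  set γ : ℝ := (p - 1) / (2 - p) with hγ
  have hγ0 : 0 ≤ γ := by
    rw [hγ]; exact div_nonneg (by linarith) (by linarith)
  set s : ℝ := r * t ^ (-pleBeta N p) with hs
  have hspos : 0 < s := by have := Real.rpow_pos_of_pos ht (-pleBeta N p); positivity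
  have hsq : 0 < pleK N p * s ^ q := by
    have := Real.rpow_pos_of_pos hspos q; positivity
  have step1 : pleBarenblatt N p Cc x t ≤ t ^ (-pleAlpha N p) * (pleK N p * s ^ q) ^ (-γ) := by
    unfold pleBarenblatt
    exact mul_le_mul_of_nonneg_left
      (Real.rpow_le_rpow_of_nonpos hsq (by linarith) (by linarith))
      (Real.rpow_pos_of_pos ht _).le
  refine step1.trans_eq ?_
  have hp1' : p - 1 ≠ 0 := by linarith
  have h2p : (2:ℝ) - p ≠ 0 := by linarith
  have hl' : (N:ℝ) * (p - 2) + p ≠ 0 := by unfold pleLambda at hl; linarith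
  have hlogk : Real.log (pleK N p) =
      Real.log ((2-p)/p) + (-(1/(p-1))) * Real.log (pleLambda N p) := by
    unfold pleK
    rw [Real.log_mul hap.ne' (Real.rpow_pos_of_pos hl _).ne', Real.log_rpow hl]
  have hlogs : Real.log s = Real.log r + (-pleBeta N p) * Real.log t := by
    rw [hs, Real.log_mul hr.ne' (Real.rpow_pos_of_pos ht _).ne', Real.log_rpow ht]
  rw [Real.rpow_def_of_pos ht, Real.rpow_def_of_pos hsq, Real.rpow_def_of_pos ht,
      Real.rpow_def_of_pos hap, Real.rpow_def_of_pos hl, Real.rpow_def_of_pos hr,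
      ← Real.exp_add, ← Real.exp_add, ← Real.exp_add, ← Real.exp_add]
  congr 1
  rw [Real.log_mul hk.ne' (Real.rpow_pos_of_pos hspos q).ne', Real.log_rpow hspos,
      hlogk, hlogs]
  unfold pleAlpha pleBeta pleLambda
  rw [hq, hγ]
  field_simp
  ring

lemma ple_tail_integrableOn (N : ℕ) {a δ : ℝ} (ha : (N:ℝ) < a) (hδ : 0 < δ) :
    IntegrableOn (fun x : EuclideanSpace ℝ (Fin N) => ‖x‖ ^ (-a))
      {x : EuclideanSpace ℝ (Fin N) | δ ≤ ‖x‖} := by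
  have ha0 : 0 ≤ a := le_trans (by positivity) ha.le
  have hint : Integrable (fun x : EuclideanSpace ℝ (Fin N) =>
      ((1+δ)/δ) ^ a * (1 + ‖x‖) ^ (-a)) := by
    refine Integrable.const_mul ?_ _
    refine integrable_one_add_norm ?_
    rwa [finrank_euclideanSpace_fin]
  refine Integrable.mono' hint.integrableOn ?_ ?_
  · exact (measurable_norm.pow measurable_const).aestronglyMeasurable
  · filter_upwards [ae_restrict_mem
      ((isClosed_le continuous_const continuous_norm).measurableSet)] with x hx
    have hx' : δ ≤ ‖x‖ := hx
    have hxpos : 0 < ‖x‖ := lt_of_lt_of_le hδ hx'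
    rw [Real.norm_eq_abs, abs_of_nonneg (Real.rpow_nonneg (norm_nonneg _) _)]
    have h1 : ‖x‖ ^ (-a) = (‖x‖⁻¹) ^ a := by
      rw [Real.rpow_neg (norm_nonneg _), ← Real.inv_rpow (norm_nonneg _)]
    have h2 : ((1+δ)/δ) ^ a * (1 + ‖x‖) ^ (-a) = (((1+δ)/δ) * (1 + ‖x‖)⁻¹) ^ a := by
      rw [Real.mul_rpow (by positivity) (by positivity), Real.inv_rpow (by positivity),
        ← Real.rpow_neg (by positivity)]
    rw [h1, h2]
    refine Real.rpow_le_rpow (by positivity) ?_ ha0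
    rw [div_mul_eq_mul_div, inv_eq_one_div, div_le_div_iff₀ hxpos (by positivity)]
    have h3 : (1 + ‖x‖)⁻¹ * (1 + ‖x‖) = 1 := inv_mul_cancel₀ (by positivity)
    nlinarith [mul_nonneg (sub_nonneg.mpr hx')
      (inv_pos.mpr (by positivity : (0:ℝ) < 1 + ‖x‖)).le]

lemma ple_tail_integral (N : ℕ) (hN : 2 ≤ N) {a δ : ℝ} (ha : (N:ℝ) < a) (hδ : 0 < δ) :
    ∫ x in {x : EuclideanSpace ℝ (Fin N) | δ ≤ ‖x‖}, ‖x‖ ^ (-a) =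
      ((N : ℝ) * (volume (Metric.ball (0:EuclideanSpace ℝ (Fin N)) 1)).toReal) *
        (δ ^ ((N:ℝ) - a) / (a - N)) := by
  haveI : NeZero N := ⟨by omega⟩
  haveI : Nontrivial (EuclideanSpace ℝ (Fin N)) := by infer_instance
  have hfr : Module.finrank ℝ (EuclideanSpace ℝ (Fin N)) = N := finrank_euclideanSpace_fin
  have hS : MeasurableSet {x : EuclideanSpace ℝ (Fin N) | δ ≤ ‖x‖} :=
    (isClosed_le continuous_const continuous_norm).measurableSet
  have key := MeasureTheory.integral_fun_norm_addHaar
    (volume : Measure (EuclideanSpace ℝ (Fin N)))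
    ((Ici δ).indicator fun r : ℝ => r ^ (-a))
  rw [hfr] at key
  have e1 : (fun x : EuclideanSpace ℝ (Fin N) =>
      (Ici δ).indicator (fun r => r ^ (-a)) ‖x‖)
      = {x : EuclideanSpace ℝ (Fin N) | δ ≤ ‖x‖}.indicator (fun x => ‖x‖ ^ (-a)) := by
    ext x; by_cases h : δ ≤ ‖x‖ <;> simp [Set.indicator, h]
  rw [show (∫ x : EuclideanSpace ℝ (Fin N), (Ici δ).indicator (fun r => r ^ (-a)) ‖x‖)
      = ∫ x, ({x : EuclideanSpace ℝ (Fin N) | δ ≤ ‖x‖}.indicator (fun x => ‖x‖ ^ (-a))) x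
      from by rw [← e1], integral_indicator hS] at key
  rw [key, nsmul_eq_mul, smul_eq_mul]
  have e2 : ∀ y : ℝ, y ^ (N - 1) • (Ici δ).indicator (fun r : ℝ => r ^ (-a)) y
      = (Ici δ).indicator (fun r : ℝ => r ^ (N-1) * r ^ (-a)) y := by
    intro y
    by_cases h : y ∈ Ici δ <;> simp [Set.indicator, h]
  rw [MeasureTheory.integral_congr_ae (Filter.Eventually.of_forall (fun y => e2 y))]
  have hsub : Ici δ ∩ Ioi (0:ℝ) = Ici δ :=
    inter_eq_left.mpr (fun y hy => lt_of_lt_of_le hδ hy)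
  rw [MeasureTheory.integral_indicator measurableSet_Ici,
    Measure.restrict_restrict measurableSet_Ici, hsub]
  have e3 : ∫ y in Ici δ, y ^ (N-1) * y ^ (-a) = ∫ y in Ici δ, y ^ ((N:ℝ) - 1 - a) := by
    refine setIntegral_congr_fun measurableSet_Ici (fun y hy => ?_)
    have hy0 : 0 < y := lt_of_lt_of_le hδ hy
    rw [← Real.rpow_natCast y (N-1), ← Real.rpow_add hy0]
    congr 1
    have h1 : ((N - 1 : ℕ) : ℝ) = (N : ℝ) - 1 := by
      have : 1 ≤ N := by omega
      push_cast [this]; ring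
    rw [h1]; ring
  have e4 : ∫ y in Ici δ, y ^ ((N:ℝ) - 1 - a) = δ ^ ((N:ℝ) - a) / (a - N) := by
    rw [integral_Ici_eq_integral_Ioi, integral_Ioi_rpow_of_lt (by linarith) hδ]
    rw [show (N:ℝ) - 1 - a + 1 = (N:ℝ) - a by ring]
    have h4 : (N:ℝ) - a ≠ 0 := by linarith
    have h5 : a - (N:ℝ) ≠ 0 := by linarith
    field_simp
    ring
  rw [e3, e4]; simp only [measureReal_def]; ring

/-- Disappearance of the `p`-Laplacian fundamental solution at the critical
exponent `p_c = 2N/(N+1)`, `N ≥ 2`: if the Barenblatt solutions `B_p(·,t)` all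
have mass `M`, then as `p → p_c⁺` they converge to `0` pointwise away from the
origin and, in the weak-* sense against bounded continuous functions, to
the Dirac mass `M δ₀`. -/
theorem ple_barenblatt_to_dirac (N : ℕ) (hN : 2 ≤ N)
    (pc : ℝ) (hpc : pc = 2 * N / (N + 1))
    (M t : ℝ) (hM : 0 < M) (ht : 0 < t)
    (C : ℝ → ℝ) (hCpos : ∀ p, pc < p → p < 2 → 0 < C p)
    (hmass : ∀ p, pc < p → p < 2 →
      ∫ x, pleBarenblatt N p (C p) x t = M) :
    (∀ x : EuclideanSpace ℝ (Fin N), x ≠ 0 →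
      Tendsto (fun p => pleBarenblatt N p (C p) x t) (𝓝[>] pc) (𝓝 0)) ∧
    (∀ f : EuclideanSpace ℝ (Fin N) → ℝ, Continuous f → (∃ K, ∀ x, |f x| ≤ K) →
      Tendsto (fun p => ∫ x, f x * pleBarenblatt N p (C p) x t)
        (𝓝[>] pc) (𝓝 (M * f 0))) := by
  have hpc1 : (1:ℝ) < pc := by rw [hpc]; exact ple_pc_gt_one hN
  have hpc2 : pc < 2 := by rw [hpc]; exact ple_pc_lt_two hN
  have h2pc : (2:ℝ) - pc ≠ 0 := by linarith
  have hpc0 : (0:ℝ) < pc := by linarith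
  have hlpc : pleLambda N pc = 0 := by
    rw [hpc]; unfold pleLambda
    have h : (0:ℝ) < (N:ℝ) + 1 := by positivity
    field_simp
    ring
  have hlamcont : Continuous (pleLambda N) := by
    unfold pleLambda; continuity
  -- eventually `pc < p < 2`
  have hEv : ∀ᶠ p in 𝓝[>] pc, pc < p ∧ p < 2 := by
    filter_upwards [self_mem_nhdsWithin,
      (eventually_lt_nhds hpc2).filter_mono nhdsWithin_le_nhds] with p h1 h2
    exact ⟨h1, h2⟩
  -- generic: `λ(p) ^ e(p) → 0` for continuous positive exponent
  have hpow : ∀ e : ℝ → ℝ, ContinuousAt e pc → 0 < e pc →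
      Tendsto (fun p => pleLambda N p ^ e p) (𝓝[>] pc) (𝓝 0) := by
    intro e he hepos
    have hc : ContinuousAt (fun p => pleLambda N p ^ e p) pc :=
      ContinuousAt.rpow hlamcont.continuousAt he (Or.inr hepos)
    have hval : pleLambda N pc ^ e pc = 0 := by
      rw [hlpc, Real.zero_rpow hepos.ne']
    have := hc.tendsto
    rw [hval] at this
    exact this.mono_left nhdsWithin_le_nhds
  have hinvcont : ContinuousAt (fun p : ℝ => (2 - p)⁻¹) pc :=
    ((continuous_const.sub continuous_id).continuousAt).inv₀ h2pc
  have hcont1 : ContinuousAt (fun p : ℝ => t ^ (2-p)⁻¹) pc :=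
    (Real.continuousAt_const_rpow ht.ne').comp hinvcont
  have hcont2 : ContinuousAt (fun p : ℝ => ((2-p)/p) ^ (-((p-1)/(2-p)))) pc := by
    refine ContinuousAt.rpow ?_ ?_ (Or.inl ?_)
    · exact ((continuous_const.sub continuous_id).continuousAt).div
        continuous_id.continuousAt hpc0.ne'
    · exact (((continuous_id.sub continuous_const).continuousAt).div
        ((continuous_const.sub continuous_id).continuousAt) h2pc).neg
    · exact (div_pos (by linarith) hpc0).ne'
  -- the prefactor `D` and its convergence to zero
  set D : ℝ → ℝ := fun p =>
    t ^ (2 - p)⁻¹ * ((2 - p) / p) ^ (-((p - 1) / (2 - p))) * pleLambda N p ^ (2 - p)⁻¹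
    with hD
  have hDto : Tendsto D (𝓝[>] pc) (𝓝 0) := by
    have h1 : Tendsto (fun p : ℝ => t ^ (2-p)⁻¹ * ((2-p)/p) ^ (-((p-1)/(2-p))))
        (𝓝[>] pc) (𝓝 (t ^ (2-pc)⁻¹ * ((2-pc)/pc) ^ (-((pc-1)/(2-pc))))) :=
      (hcont1.mul hcont2).tendsto.mono_left nhdsWithin_le_nhds
    have h2 := hpow (fun p => (2-p)⁻¹) hinvcont (by
      have : (0:ℝ) < 2 - pc := by linarith
      positivity)
    have := h1.mul h2
    simpa using this
  -- facts valid for each good p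
  have hgood : ∀ p : ℝ, pc < p → p < 2 →
      (1 < p ∧ 0 < pleLambda N p ∧ 0 < pleK N p ∧ (N:ℝ) < p / (2-p)) := by
    intro p h1 h2
    have hp1 : 1 < p := hpc1.trans h1
    have hlam : 0 < pleLambda N p := by
      refine ple_lambda_pos ?_; rw [← hpc]; exact h1
    refine ⟨hp1, hlam, ple_k_pos hlam (by linarith) h2, ?_⟩
    rw [lt_div_iff₀ (by linarith : (0:ℝ) < 2 - p)]
    unfold pleLambda at hlam; nlinarith
  constructor
  · -- part (a)
    intro x hx
    have hxn : 0 < ‖x‖ := norm_pos_iff.mpr hx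
    refine squeeze_zero' (g := fun p => D p * ‖x‖ ^ (-(p/(2-p)))) ?_ ?_ ?_
    · filter_upwards [hEv] with p ⟨h1, h2⟩
      obtain ⟨hp1, hlam, hk, _⟩ := hgood p h1 h2
      exact ple_barenblatt_nonneg hk.le (hCpos p h1 h2).le ht.le x
    · filter_upwards [hEv] with p ⟨h1, h2⟩
      obtain ⟨hp1, hlam, hk, _⟩ := hgood p h1 h2
      have := ple_barenblatt_le hp1 h2 hlam (hCpos p h1 h2) ht hx
      rw [hD]
      exact this
    · have h3 : Tendsto (fun p : ℝ => ‖x‖ ^ (-(p/(2-p)))) (𝓝[>] pc)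
          (𝓝 (‖x‖ ^ (-(pc/(2-pc))))) := by
        refine (ContinuousAt.tendsto ?_).mono_left nhdsWithin_le_nhds
        exact (Real.continuousAt_const_rpow hxn.ne').comp
          ((continuous_id.continuousAt.div
            ((continuous_const.sub continuous_id).continuousAt) h2pc).neg)
      have := hDto.mul h3
      simpa using this
  · -- part (b)
    intro f hf ⟨K, hK⟩
    have hK0 : 0 ≤ K := le_trans (abs_nonneg _) (hK 0)
    rw [Metric.tendsto_nhds]
    intro ε hε
    have hε' : 0 < ε / (2 * M) := by positivity
    obtain ⟨δ, hδ, hδf⟩ := Metric.continuousAt_iff.mp hf.continuousAt (ε / (2*M)) hε'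
    set cN : ℝ := (N : ℝ) * (volume (Metric.ball (0:EuclideanSpace ℝ (Fin N)) 1)).toReal
      with hcN
    -- the tail bound tends to zero
    have htail : Tendsto (fun p => D p * (cN * (δ ^ ((N:ℝ) - p/(2-p)) / (p/(2-p) - N))))
        (𝓝[>] pc) (𝓝 0) := by
      have hEq : ∀ᶠ p in 𝓝[>] pc,
          (t ^ (2-p)⁻¹ * ((2-p)/p) ^ (-((p-1)/(2-p))) *
            (cN * δ ^ ((N:ℝ) - p/(2-p)) * (2-p))) * pleLambda N p ^ ((2-p)⁻¹ - 1)
          = D p * (cN * (δ ^ ((N:ℝ) - p/(2-p)) / (p/(2-p) - N))) := by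
        filter_upwards [hEv] with p ⟨h1, h2⟩
        obtain ⟨hp1, hlam, hk, _⟩ := hgood p h1 h2
        have h2p : (2:ℝ) - p ≠ 0 := by linarith
        have hap : p/(2-p) - (N:ℝ) = pleLambda N p / (2-p) := by
          unfold pleLambda; field_simp; ring
        rw [Real.rpow_sub hlam, Real.rpow_one, hap, hD]
        field_simp
      refine Tendsto.congr' hEq ?_
      have h1 : Tendsto (fun p : ℝ => t ^ (2-p)⁻¹ * ((2-p)/p) ^ (-((p-1)/(2-p))) *
          (cN * δ ^ ((N:ℝ) - p/(2-p)) * (2-p))) (𝓝[>] pc)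
          (𝓝 (t ^ (2-pc)⁻¹ * ((2-pc)/pc) ^ (-((pc-1)/(2-pc))) *
            (cN * δ ^ ((N:ℝ) - pc/(2-pc)) * (2-pc)))) := by
        refine (ContinuousAt.tendsto ?_).mono_left nhdsWithin_le_nhds
        refine (hcont1.mul hcont2).mul ((ContinuousAt.mul continuousAt_const ?_).mul
          ((continuous_const.sub continuous_id).continuousAt))
        exact (Real.continuousAt_const_rpow hδ.ne').comp
          (ContinuousAt.sub continuousAt_const
            (continuous_id.continuousAt.div
              ((continuous_const.sub continuous_id).continuousAt) h2pc))
      have h2 := hpow (fun p => (2-p)⁻¹ - 1) (ContinuousAt.sub hinvcont continuousAt_const)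
        (by
          have ha : (0:ℝ) < 2 - pc := by linarith
          have hb : 2 - pc < 1 := by linarith
          have : (1:ℝ) < (2-pc)⁻¹ := (one_lt_inv₀ ha).mpr hb
          linarith)
      have := h1.mul h2
      simpa using this
    have hε2 : 0 < ε / 2 := by linarith
    have hsmall : ∀ᶠ p in 𝓝[>] pc,
        |(2*K) * (D p * (cN * (δ ^ ((N:ℝ) - p/(2-p)) / (p/(2-p) - N))))| < ε / 2 := by
      have := (htail.const_mul (2*K)).abs
      rw [mul_zero, abs_zero] at this
      exact this.eventually_lt_const hε2
    filter_upwards [hEv, hsmall] with p hp hsp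
    obtain ⟨h1, h2⟩ := hp
    obtain ⟨hp1, hlam, hk, haN⟩ := hgood p h1 h2
    have hCp := hCpos p h1 h2
    have hmassp := hmass p h1 h2
    set B : EuclideanSpace ℝ (Fin N) → ℝ := fun x => pleBarenblatt N p (C p) x t with hB
    have hBnn : ∀ x, 0 ≤ B x := fun x => ple_barenblatt_nonneg hk.le hCp.le ht.le x
    have hBint : Integrable B := by
      by_contra hni
      rw [MeasureTheory.integral_undef hni] at hmassp
      exact hM.ne hmassp
    have hS : MeasurableSet {x : EuclideanSpace ℝ (Fin N) | δ ≤ ‖x‖} :=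
      (isClosed_le continuous_const continuous_norm).measurableSet
    have hfm : AEStronglyMeasurable f volume := hf.aestronglyMeasurable
    have hfB : Integrable (fun x => f x * B x) :=
      hBint.bdd_mul hfm (c := K) (Filter.Eventually.of_forall fun x => by rw [Real.norm_eq_abs]; exact hK x)
    have hgB : Integrable (fun x => |f x - f 0| * B x) := by
      refine hBint.bdd_mul ((hf.sub continuous_const).abs).aestronglyMeasurable
        (c := 2*K) (Filter.Eventually.of_forall fun x => ?_)
      rw [Real.norm_eq_abs, abs_abs]
      calc |f x - f 0| ≤ |f x| + |f 0| := abs_sub _ _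
        _ ≤ 2*K := by have := hK x; have := hK 0; linarith
    -- rewrite the difference
    have hdiff : (∫ x, f x * B x) - M * f 0 = ∫ x, (f x - f 0) * B x := by
      have h1' : ∫ x, (f x - f 0) * B x = (∫ x, f x * B x) - ∫ x, f 0 * B x := by
        rw [← MeasureTheory.integral_sub hfB (hBint.const_mul (f 0))]
        congr 1; ext x; ring
      rw [h1', MeasureTheory.integral_const_mul, hmassp]
      ring
    have habs : |∫ x, (f x - f 0) * B x| ≤ ∫ x, |f x - f 0| * B x := by
      have h := MeasureTheory.norm_integral_le_integral_norm (μ := volume) (fun x => (f x - f 0) * B x)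
      calc |∫ x, (f x - f 0) * B x| ≤ ∫ x, ‖(f x - f 0) * B x‖ := h
        _ = ∫ x, |f x - f 0| * B x := by
          congr 1; ext x
          rw [Real.norm_eq_abs, abs_mul, abs_of_nonneg (hBnn x)]
    -- split into near and far parts
    have hsplit : ∫ x, |f x - f 0| * B x =
        (∫ x in {x : EuclideanSpace ℝ (Fin N) | δ ≤ ‖x‖}, |f x - f 0| * B x) +
        ∫ x in {x : EuclideanSpace ℝ (Fin N) | δ ≤ ‖x‖}ᶜ, |f x - f 0| * B x :=
      (MeasureTheory.integral_add_compl hS hgB).symm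
    -- far part
    have hfar : (∫ x in {x : EuclideanSpace ℝ (Fin N) | δ ≤ ‖x‖}, |f x - f 0| * B x)
        ≤ (2*K) * (D p * (cN * (δ ^ ((N:ℝ) - p/(2-p)) / (p/(2-p) - N)))) := by
      have hIa : IntegrableOn (fun x : EuclideanSpace ℝ (Fin N) => ‖x‖ ^ (-(p/(2-p))))
          {x : EuclideanSpace ℝ (Fin N) | δ ≤ ‖x‖} := ple_tail_integrableOn N haN hδ
      have step1 : (∫ x in {x : EuclideanSpace ℝ (Fin N) | δ ≤ ‖x‖}, |f x - f 0| * B x)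
          ≤ ∫ x in {x : EuclideanSpace ℝ (Fin N) | δ ≤ ‖x‖}, (2*K) * B x := by
        refine MeasureTheory.setIntegral_mono_on hgB.integrableOn
          ((hBint.const_mul _).integrableOn) hS (fun x hxS => ?_)
        refine mul_le_mul_of_nonneg_right ?_ (hBnn x)
        calc |f x - f 0| ≤ |f x| + |f 0| := abs_sub _ _
          _ ≤ 2*K := by have := hK x; have := hK 0; linarith
      have step2 : (∫ x in {x : EuclideanSpace ℝ (Fin N) | δ ≤ ‖x‖}, (2*K) * B x)
          ≤ ∫ x in {x : EuclideanSpace ℝ (Fin N) | δ ≤ ‖x‖},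
              (2*K) * (D p * ‖x‖ ^ (-(p/(2-p)))) := by
        refine MeasureTheory.setIntegral_mono_on ((hBint.const_mul _).integrableOn)
          ((hIa.const_mul (D p)).const_mul (2*K)) hS (fun x hxS => ?_)
        refine mul_le_mul_of_nonneg_left ?_ (by linarith)
        have hxne : x ≠ 0 := by
          intro h0
          rw [h0] at hxS
          simp only [mem_setOf_eq, norm_zero] at hxS
          linarith
        have := ple_barenblatt_le hp1 h2 hlam hCp ht hxne
        rw [hD]
        exact this
      have step3 : (∫ x in {x : EuclideanSpace ℝ (Fin N) | δ ≤ ‖x‖},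
            (2*K) * (D p * ‖x‖ ^ (-(p/(2-p)))))
          = (2*K) * (D p * (cN * (δ ^ ((N:ℝ) - p/(2-p)) / (p/(2-p) - N)))) := by
        rw [MeasureTheory.integral_const_mul, MeasureTheory.integral_const_mul,
          ple_tail_integral N hN haN hδ, hcN]
      calc _ ≤ _ := step1
        _ ≤ _ := step2
        _ = _ := step3
    -- near part
    have hnear : (∫ x in {x : EuclideanSpace ℝ (Fin N) | δ ≤ ‖x‖}ᶜ, |f x - f 0| * B x)
        ≤ ε / 2 := by
      have step1 : (∫ x in {x : EuclideanSpace ℝ (Fin N) | δ ≤ ‖x‖}ᶜ, |f x - f 0| * B x)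
          ≤ ∫ x in {x : EuclideanSpace ℝ (Fin N) | δ ≤ ‖x‖}ᶜ, (ε/(2*M)) * B x := by
        refine MeasureTheory.setIntegral_mono_on hgB.integrableOn
          ((hBint.const_mul _).integrableOn) hS.compl (fun x hxS => ?_)
        refine mul_le_mul_of_nonneg_right ?_ (hBnn x)
        have hxd : dist x 0 < δ := by
          rw [dist_zero_right]
          simpa [mem_compl_iff, mem_setOf_eq, not_le] using hxS
        have := hδf hxd
        rw [Real.dist_eq] at this
        exact this.le
      have step2 : (∫ x in {x : EuclideanSpace ℝ (Fin N) | δ ≤ ‖x‖}ᶜ, (ε/(2*M)) * B x)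
          ≤ (ε/(2*M)) * M := by
        rw [MeasureTheory.integral_const_mul]
        refine mul_le_mul_of_nonneg_left ?_ hε'.le
        calc (∫ x in {x : EuclideanSpace ℝ (Fin N) | δ ≤ ‖x‖}ᶜ, B x)
            ≤ ∫ x, B x := MeasureTheory.setIntegral_le_integral hBint
              (Filter.Eventually.of_forall hBnn)
          _ = M := hmassp
      have : (ε/(2*M)) * M = ε / 2 := by field_simp
      linarith
    -- combine
    rw [Real.dist_eq, hdiff]
    have hfarnn : (2*K) * (D p * (cN * (δ ^ ((N:ℝ) - p/(2-p)) / (p/(2-p) - N))))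
        ≤ |(2*K) * (D p * (cN * (δ ^ ((N:ℝ) - p/(2-p)) / (p/(2-p) - N))))| :=
      le_abs_self _
    calc |∫ x, (f x - f 0) * B x| ≤ ∫ x, |f x - f 0| * B x := habs
      _ = _ + _ := hsplit
      _ < ε := by linarith
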